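/- Let A be a finite set with |A| = q ≥ 2 and let n ≥ 1. There exist m ≥ n and a transformation f : A^m → A^m that is a complete quasi-parallel n-universal transformation, i.e. f sequentially simulates in quasi-parallel every finite sequence of transformations of A^n. -/

import Mathlib

/-- Projection of `A^m` onto the first `n` coordinates. -/
def pr {A : Type*} {m n : ℕ} (hmn : n ≤ m) (x : Fin m → A) : Fin n → A :=
  fun i => x (Fin.castLE hmn i)

/-- `F^([m-1])`: update all registers except the last one in parallel using the
coordinate functions of `f`. -/
def parAll {A : Type*} {m : ℕ} (f : (Fin (m + 1) → A) → Fin (m + 1) → A) :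
    (Fin (m + 1) → A) → Fin (m + 1) → A :=
  fun x i => if i = Fin.last m then x i else f x i

/-- `F^(m)`: the instruction updating only the last register. -/
def parLast {A : Type*} {m : ℕ} (f : (Fin (m + 1) → A) → Fin (m + 1) → A) :
    (Fin (m + 1) → A) → Fin (m + 1) → A :=
  fun x i => if i = Fin.last m then f x i else x i

/-- Apply a word over `{F^([m-1]), F^(m)}` (encoded by booleans: `false ↦ F^([m-1])`,
`true ↦ F^(m)`), first letter first. -/
def applyQP {A : Type*} {m : ℕ} (f : (Fin (m + 1) → A) → Fin (m + 1) → A) :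
    List Bool → (Fin (m + 1) → A) → Fin (m + 1) → A
  | [], x => x
  | b :: l, x => applyQP f l ((if b then parLast f else parAll f) x)

open Fin.CommRing

section Machine

variable {A : Type*} [DecidableEq A] [Nonempty A] {n P M : ℕ} [NeZero P]

set_option linter.unusedSectionVars false

/-- Build a state from display `y`, base `z`, phase `c`, flag `μ`, last register `rv`. -/
def bld (enc : ((Fin n → A) × Fin P × Bool) → (Fin M → A))
    (y z : Fin n → A) (c : Fin P) (μ : Bool) (rv : A) : Fin (n + M + 1) → A :=
  fun i => if h : (i : ℕ) < n then y ⟨i, h⟩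
    else if h2 : (i : ℕ) < n + M then enc (z, c, μ) ⟨(i : ℕ) - n, by omega⟩
    else rv

/-- Display part of a state. -/
def yv (x : Fin (n + M + 1) → A) : Fin n → A :=
  fun i => x (Fin.castLE (by omega) i)

/-- Hidden block of a state. -/
def hid (x : Fin (n + M + 1) → A) : Fin M → A :=
  fun j => x ⟨n + (j : ℕ), by omega⟩

/-- Decoded hidden block. -/
noncomputable def dc (enc : ((Fin n → A) × Fin P × Bool) → (Fin M → A))
    (x : Fin (n + M + 1) → A) : (Fin n → A) × Fin P × Bool :=
  Function.invFun enc (hid x)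

/-- Last register. -/
def rv (x : Fin (n + M + 1) → A) : A := x (Fin.last (n + M))

/-- One parallel step of the machine. -/
noncomputable def step (G : Fin P → (Fin n → A) → Fin n → A)
    (enc : ((Fin n → A) × Fin P × Bool) → (Fin M → A)) (a1 : A)
    (x : Fin (n + M + 1) → A) : Fin (n + M + 1) → A :=
  let p := dc enc x
  if yv x = G p.2.1 p.1 then
    (if p.2.2 = decide (rv x = a1) then bld enc (yv x) (yv x) 1 (!p.2.2) (rv x)
     else bld enc (G (p.2.1 + 1) p.1) p.1 (p.2.1 + 1) p.2.2 (rv x))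
  else bld enc (yv x) (yv x) 1 p.2.2 (rv x)

/-- The value the single `F^(m)` instruction writes into the last register. -/
noncomputable def rho (G : Fin P → (Fin n → A) → Fin n → A)
    (enc : ((Fin n → A) × Fin P × Bool) → (Fin M → A)) (a0 a1 : A)
    (x : Fin (n + M + 1) → A) : A :=
  let p := dc enc x
  if yv x = G p.2.1 p.1 then (if p.2.2 then a1 else a0)
  else (if p.2.2 then a0 else a1)

/-- The universal transformation. -/
noncomputable def fQ (G : Fin P → (Fin n → A) → Fin n → A)
    (enc : ((Fin n → A) × Fin P × Bool) → (Fin M → A)) (a0 a1 : A)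
    (x : Fin (n + M + 1) → A) : Fin (n + M + 1) → A :=
  fun i => if i = Fin.last (n + M) then rho G enc a0 a1 x else step G enc a1 x i

variable (G : Fin P → (Fin n → A) → Fin n → A)
variable (enc : ((Fin n → A) × Fin P × Bool) → (Fin M → A))
variable (a0 a1 : A)

lemma yv_bld (y z : Fin n → A) (c : Fin P) (μ : Bool) (r : A) :
    yv (bld enc y z c μ r) = y := by
  funext i
  have hi : ((Fin.castLE (by omega : n ≤ n + M + 1) i : Fin (n + M + 1)) : ℕ) < n := i.isLt
  simp only [yv, bld, dif_pos hi]
  exact congrArg y (Fin.ext rfl)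

lemma hid_bld (y z : Fin n → A) (c : Fin P) (μ : Bool) (r : A) :
    hid (bld enc y z c μ r) = enc (z, c, μ) := by
  funext j
  have h1 : ¬ ((n + (j : ℕ)) < n) := by omega
  have h2 : (n + (j : ℕ)) < n + M := by have := j.isLt; omega
  simp only [hid, bld, dif_neg h1, dif_pos h2]
  congr 1
  exact Fin.ext (by simp)

lemma rv_bld (y z : Fin n → A) (c : Fin P) (μ : Bool) (r : A) :
    rv (bld enc y z c μ r) = r := by
  have h1 : ¬ (((Fin.last (n + M) : Fin (n + M + 1)) : ℕ) < n) := by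
    simp only [Fin.val_last]; omega
  have h2 : ¬ (((Fin.last (n + M) : Fin (n + M + 1)) : ℕ) < n + M) := by
    simp only [Fin.val_last]; omega
  simp only [rv, bld, dif_neg h1, dif_neg h2]

lemma dc_bld (henc : Function.Injective enc) (y z : Fin n → A) (c : Fin P) (μ : Bool) (r : A) :
    dc enc (bld enc y z c μ r) = (z, c, μ) := by
  rw [dc, hid_bld]
  exact Function.leftInverse_invFun henc _

lemma pr_bld (hmn : n ≤ n + M + 1) (y z : Fin n → A) (c : Fin P) (μ : Bool) (r : A) :
    pr hmn (bld enc y z c μ r) = y := by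
  have : pr hmn (bld enc y z c μ r) = yv (bld enc y z c μ r) := rfl
  rw [this, yv_bld]

lemma parAll_fQ : parAll (fQ G enc a0 a1) = step G enc a1 := by
  funext x i
  by_cases h : i = Fin.last (n + M)
  · subst h
    have : step G enc a1 x (Fin.last (n + M)) = rv x := by
      unfold step
      split
      · split
        · exact rv_bld enc _ _ _ _ _
        · exact rv_bld enc _ _ _ _ _
      · exact rv_bld enc _ _ _ _ _
    simp [parAll, this, rv]
  · simp [parAll, fQ, h]

lemma parLast_fQ (x : Fin (n + M + 1) → A) :
    parLast (fQ G enc a0 a1) x =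
      fun i => if i = Fin.last (n + M) then rho G enc a0 a1 x else x i := by
  funext i
  by_cases h : i = Fin.last (n + M)
  · simp [parLast, fQ, h]
  · simp [parLast, h]

end Machine

section Dynamics

variable {A : Type*} [DecidableEq A] [Nonempty A] {n P M : ℕ} [NeZero P]
variable {G : Fin P → (Fin n → A) → Fin n → A}
variable {enc : ((Fin n → A) × Fin P × Bool) → (Fin M → A)}
variable {a0 a1 : A}

set_option linter.unusedSectionVars false

/-- Advancing a locked state. -/
lemma step_adv (henc : Function.Injective enc) (b : Fin n → A) (c : Fin P) (μ : Bool) (r : A)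
    (hμ : μ ≠ decide (r = a1)) :
    step G enc a1 (bld enc (G c b) b c μ r) = bld enc (G (c + 1) b) b (c + 1) μ r := by
  unfold step
  rw [dc_bld enc henc, yv_bld, rv_bld]
  simp [hμ]

/-- Iterated advance. -/
lemma step_iter (henc : Function.Injective enc) (k : ℕ) (b : Fin n → A) (c : Fin P)
    (μ : Bool) (r : A) (hμ : μ ≠ decide (r = a1)) :
    (step G enc a1)^[k] (bld enc (G c b) b c μ r) =
      bld enc (G (c + (k : Fin P)) b) b (c + (k : Fin P)) μ r := by
  induction k generalizing c with
  | zero => simp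
  | succ k ih =>
    have hc : c + ((k + 1 : ℕ) : Fin P) = (c + 1) + (k : Fin P) := by push_cast; ring
    rw [Function.iterate_succ_apply, step_adv henc _ _ _ _ hμ, ih, hc]

/-- The key initialization lemma: after the initial `F^(m)` instruction followed by one
parallel step, every state is locked onto its own projection with an eternal flag pair. -/
lemma step_parLast (henc : Function.Injective enc) (ha : a0 ≠ a1) (x : Fin (n + M + 1) → A) :
    ∃ (μ : Bool) (r : A), μ ≠ decide (r = a1) ∧
      step G enc a1 (parLast (fQ G enc a0 a1) x) = bld enc (yv x) (yv x) 1 μ r := by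
  rw [parLast_fQ]
  set x' : Fin (n + M + 1) → A :=
    fun i => if i = Fin.last (n + M) then rho G enc a0 a1 x else x i with hx'
  have hyv : yv x' = yv x := by
    funext i
    have : (Fin.castLE (by omega : n ≤ n + M + 1) i) ≠ Fin.last (n + M) := by
      intro h
      have := congrArg Fin.val h
      simp only [Fin.coe_castLE, Fin.val_last] at this
      have := i.isLt; omega
    simp only [yv, hx', if_neg this]
  have hhid : hid x' = hid x := by
    funext j
    have : (⟨n + (j : ℕ), by have := j.isLt; omega⟩ : Fin (n + M + 1)) ≠ Fin.last (n + M) := by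
      intro h
      have := congrArg Fin.val h
      simp only [Fin.val_last] at this
      have := j.isLt; omega
    simp only [hid, hx', if_neg this]
  have hdc : dc enc x' = dc enc x := by unfold dc; rw [hhid]
  have hrv : rv x' = rho G enc a0 a1 x := by simp only [rv, hx', if_pos rfl]
  unfold step rho at *
  rw [hdc, hyv, hrv]
  set p := dc enc x
  by_cases hcons : yv x = G p.2.1 p.1
  · rw [if_pos hcons, if_pos hcons]
    cases hμ : p.2.2 with
    | true =>
      refine ⟨false, a1, by simp, ?_⟩
      simp
    | false =>
      refine ⟨true, a0, by simp [ha], ?_⟩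
      have hd : decide (a0 = a1) = false := by simp [ha]
      simp [hd]
  · rw [if_neg hcons, if_neg hcons]
    cases hμ : p.2.2 with
    | true =>
      refine ⟨true, a0, by simp [ha], ?_⟩
      simp
    | false =>
      refine ⟨false, a1, by simp, ?_⟩
      simp

end Dynamics

lemma applyQP_replicate_false {A : Type*} {m : ℕ}
    (f : (Fin (m + 1) → A) → Fin (m + 1) → A) (k : ℕ) (x : Fin (m + 1) → A) :
    applyQP f (List.replicate k false) x = (parAll f)^[k] x := by
  induction k generalizing x with
  | zero => rfl
  | succ k ih =>
    rw [List.replicate_succ]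
    show applyQP f (List.replicate k false) (parAll f x) = _
    rw [ih, Function.iterate_succ_apply]

section Schedule

variable (A : Type*) [Fintype A] [DecidableEq A] (n : ℕ)

/-- The monoid of transformations of `A^n`. -/
abbrev Tr := (Fin n → A) → Fin n → A

/-- Number of transformations of `A^n`. -/
noncomputable def NT : ℕ := Fintype.card (Tr A n)

/-- Enumeration of the transformations. -/
noncomputable def eT : Tr A n ≃ Fin (NT A n) := Fintype.equivFin _

/-- The display schedule: slot `0` and `1` are the identity, slots `j + 2` enumerate
all transformations. -/
noncomputable def GS : Fin (NT A n + 2) → Tr A n :=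
  fun j => if h : 2 ≤ (j : ℕ) then (eT A n).symm ⟨(j : ℕ) - 2, by have := j.isLt; omega⟩ else id

/-- The slot of a transformation. -/
noncomputable def idxT (g : Tr A n) : ℕ := ((eT A n) g : ℕ) + 2

lemma idxT_bounds (g : Tr A n) : 2 ≤ idxT A n g ∧ idxT A n g < NT A n + 2 := by
  refine ⟨by simp [idxT], ?_⟩
  have := ((eT A n) g).isLt
  simp only [idxT]; omega

lemma GS_one : GS A n 1 = id := by
  have h1 : ((1 : Fin (NT A n + 2)) : ℕ) = 1 := rfl
  unfold GS
  rw [dif_neg (by omega)]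

lemma GS_idx (g : Tr A n) : GS A n ((idxT A n g : ℕ) : Fin (NT A n + 2)) = g := by
  have hb := idxT_bounds A n g
  have hv : (((idxT A n g : ℕ) : Fin (NT A n + 2)) : ℕ) = idxT A n g := by
    rw [Fin.val_natCast]
    exact Nat.mod_eq_of_lt hb.2
  unfold GS
  rw [dif_pos (by omega)]
  have : (⟨(((idxT A n g : ℕ) : Fin (NT A n + 2)) : ℕ) - 2, by omega⟩ : Fin (NT A n)) =
      (eT A n) g := by
    apply Fin.ext
    show (((idxT A n g : ℕ) : Fin (NT A n + 2)) : ℕ) - 2 = _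
    rw [hv]
    simp [idxT]
  rw [this, Equiv.symm_apply_apply]

end Schedule

theorem complete_quasi_parallel_universal (q n : ℕ) (hq : 2 ≤ q) (hn : 1 ≤ n)
    (A : Type*) [Fintype A] (hA : Fintype.card A = q) :
    ∃ (m : ℕ) (hmn : n ≤ m + 1) (f : (Fin (m + 1) → A) → Fin (m + 1) → A),
      ∀ gs : List ((Fin n → A) → Fin n → A),
        ∃ hs : List (List Bool),
          hs.length = gs.length ∧ (∀ b ∈ hs, b ≠ []) ∧
          hs.flatten.count true ≤ 1 ∧
          ∀ (i : ℕ) (hi : i < gs.length) (x : Fin (m + 1) → A),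
            gs.get ⟨i, hi⟩ (pr hmn x) = pr hmn (applyQP f ((hs.take (i + 1)).flatten) x) := by
  classical
  haveI : Nonempty A := Fintype.card_pos_iff.mp (by omega)
  obtain ⟨a0, a1, ha⟩ := Fintype.exists_pair_of_one_lt_card (α := A) (by omega)
  set P : ℕ := NT A n + 2 with hPdef
  set M : ℕ := n + P + 2 with hMdef
  have hNT : 1 ≤ NT A n := Fintype.card_pos
  have hcard : Fintype.card ((Fin n → A) × Fin P × Bool) ≤ Fintype.card (Fin M → A) := by
    have h1 : Fintype.card ((Fin n → A) × Fin P × Bool)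
        = Fintype.card A ^ n * (P * 2) := by
      rw [Fintype.card_prod, Fintype.card_prod, Fintype.card_bool, Fintype.card_fin,
        Fintype.card_fun, Fintype.card_fin]
    have h2 : Fintype.card (Fin M → A) = Fintype.card A ^ n * Fintype.card A ^ (P + 2) := by
      rw [Fintype.card_fun, Fintype.card_fin, ← pow_add]
      congr 1
    rw [h1, h2]
    apply Nat.mul_le_mul_left
    have h3 : P < 2 ^ P := Nat.lt_two_pow_self
    have h4 : (2 : ℕ) ^ (P + 2) = 2 ^ P * 4 := by ring
    have h5 : (2 : ℕ) ^ (P + 2) ≤ Fintype.card A ^ (P + 2) :=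
      Nat.pow_le_pow_left (by omega) _
    omega
  obtain ⟨emb⟩ := Function.Embedding.nonempty_of_card_le hcard
  have henc : Function.Injective (emb : ((Fin n → A) × Fin P × Bool) → (Fin M → A)) :=
    emb.injective
  refine ⟨n + M, by omega, fQ (GS A n) (emb : _ → _) a0 a1, ?_⟩
  intro gs
  rcases Nat.eq_zero_or_pos gs.length with hlen | hlen
  · refine ⟨[], by simp [hlen], by simp, by simp, ?_⟩
    intro i hi
    omega
  -- the slot of the i-th demanded transformation
  set ix : ℕ → ℕ := fun i => if h : i < gs.length then idxT A n (gs.get ⟨i, h⟩) else 2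
    with hixdef
  have hixb : ∀ i, 2 ≤ ix i ∧ ix i < P := by
    intro i
    by_cases h : i < gs.length
    · simp only [hixdef, dif_pos h]
      exact idxT_bounds A n _
    · simp only [hixdef, dif_neg h]
      omega
  set An : ℕ → ℕ := fun i => P * (i + 1) + ix i with hAndef
  have hAn1 : ∀ i, 1 ≤ An i := by
    intro i
    have := (hixb i).1
    simp only [hAndef]
    omega
  have hAnstep : ∀ i, An i + (An (i + 1) - An i) = An (i + 1) ∧ 1 ≤ An (i + 1) - An i := by
    intro i
    have h1 := hixb i
    have h2 := hixb (i + 1)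
    have hmul : P * (i + 1 + 1) = P * (i + 1) + P := by ring
    simp only [hAndef]
    omega
  set hs : List (List Bool) := List.ofFn (fun j : Fin gs.length =>
    if (j : ℕ) = 0 then true :: List.replicate (An 0) false
    else List.replicate (An (j : ℕ) - An ((j : ℕ) - 1)) false) with hhsdef
  have hslen : hs.length = gs.length := by simp [hhsdef]
  have hsget : ∀ (i : ℕ) (h : i < gs.length),
      hs[i]'(by omega) = if i = 0 then true :: List.replicate (An 0) false
        else List.replicate (An i - An (i - 1)) false := by
    intro i h
    simp [hhsdef]
  have hflat : ∀ i, i < gs.length →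
      (hs.take (i + 1)).flatten = true :: List.replicate (An i) false := by
    intro i
    induction i with
    | zero =>
      intro hi
      rw [List.take_succ, List.take_zero, List.nil_append]
      rw [List.getElem?_eq_getElem (by omega), hsget 0 hi]
      simp
    | succ i ih =>
      intro hi
      have hi' : i < gs.length := by omega
      rw [List.take_succ, List.flatten_append, ih hi']
      rw [List.getElem?_eq_getElem (by omega), hsget (i + 1) hi]
      simp only [Nat.add_sub_cancel, if_neg (Nat.succ_ne_zero i)]
      have hrep := (hAnstep i).1
      simp only [Option.toList_some, List.flatten_cons, List.flatten_nil, List.append_nil]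
      rw [List.cons_append, ← List.replicate_add, hrep]
  refine ⟨hs, hslen, ?_, ?_, ?_⟩
  · -- nonempty words
    intro b hb
    rw [hhsdef, List.mem_ofFn] at hb
    obtain ⟨j, rfl⟩ := hb
    by_cases h : (j : ℕ) = 0
    · simp [h]
    · have := (hAnstep ((j : ℕ) - 1)).2
      have hj : (j : ℕ) - 1 + 1 = (j : ℕ) := by omega
      rw [hj] at this
      simp only [if_neg h]
      intro hcon
      have := congrArg List.length hcon
      simp at this
      omega
  · -- at most one `true`
    have htake : hs = hs.take gs.length := by rw [← hslen, List.take_length]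
    have h1 : gs.length = (gs.length - 1) + 1 := by omega
    rw [htake, h1, hflat (gs.length - 1) (by omega)]
    simp [List.count_cons, List.count_replicate]
  · -- the simulation property
    intro i hi x
    rw [hflat i hi]
    have e0 : applyQP (fQ (GS A n) (emb : _ → _) a0 a1) (true :: List.replicate (An i) false) x
        = applyQP (fQ (GS A n) (emb : _ → _) a0 a1) (List.replicate (An i) false)
            (parLast (fQ (GS A n) (emb : _ → _) a0 a1) x) := rfl
    rw [e0, applyQP_replicate_false, parAll_fQ]
    obtain ⟨k, hk⟩ : ∃ k, An i = k + 1 := ⟨An i - 1, by have := hAn1 i; omega⟩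
    rw [hk, Function.iterate_succ_apply]
    obtain ⟨μ, r, hμr, hstep1⟩ := step_parLast (G := GS A n) henc ha x
    rw [hstep1]
    have hyb : bld (emb : _ → _) (yv x) (yv x) 1 μ r
        = bld (emb : _ → _) (GS A n 1 (yv x)) (yv x) 1 μ r := by
      rw [GS_one]
      rfl
    rw [hyb, step_iter henc k _ _ _ _ hμr]
    have hpr : pr (by omega : n ≤ n + M + 1) (bld (emb : _ → _)
        (GS A n (1 + (k : Fin P)) (yv x)) (yv x) (1 + (k : Fin P)) μ r)
        = GS A n (1 + (k : Fin P)) (yv x) := pr_bld _ _ _ _ _ _ _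
    rw [hpr]
    have hcast1 : (1 + (k : Fin P) : Fin P) = ((An i : ℕ) : Fin P) := by
      rw [hk]
      push_cast
      ring
    have hcast2 : ((An i : ℕ) : Fin P) = ((idxT A n (gs.get ⟨i, hi⟩) : ℕ) : Fin P) := by
      have : An i = P * (i + 1) + idxT A n (gs.get ⟨i, hi⟩) := by
        simp only [hAndef, hixdef, dif_pos hi]
      rw [this, Nat.cast_add, Nat.cast_mul, Fin.natCast_self, zero_mul, zero_add]
    rw [hcast1, hcast2, GS_idx]
    rfl
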